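/- Let M be a right R-module. If M ⊕ M is a C3 module, then M is a C2 module: every submodule of M isomorphic to a direct summand of M is itself a direct summand of M. -/

import Mathlib

def IsSummand {R M : Type*} [Ring R] [AddCommGroup M] [Module R M]
    (p : Submodule R M) : Prop :=
  ∃ q : Submodule R M, IsCompl p q

section aux

variable {R M : Type*} [Ring R] [AddCommGroup M] [Module R M]

lemma isCompl_prod {p p' q q' : Submodule R M} (h : IsCompl p p') (h' : IsCompl q q') :
    IsCompl (p.prod q) (p'.prod q') := by
  constructor
  · rw [disjoint_iff, eq_bot_iff]
    rintro ⟨a, b⟩ ⟨⟨ha, hb⟩, ⟨ha', hb'⟩⟩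
    have ha2 : a ∈ p ⊓ p' := ⟨ha, ha'⟩
    have hb2 : b ∈ q ⊓ q' := ⟨hb, hb'⟩
    rw [h.inf_eq_bot] at ha2
    rw [h'.inf_eq_bot] at hb2
    simp_all
  · rw [codisjoint_iff, eq_top_iff]
    rintro ⟨a, b⟩ -
    have ha : a ∈ p ⊔ p' := by rw [h.sup_eq_top]; trivial
    have hb : b ∈ q ⊔ q' := by rw [h'.sup_eq_top]; trivial
    obtain ⟨a1, ha1, a2, ha2, rfl⟩ := Submodule.mem_sup.mp ha
    obtain ⟨b1, hb1, b2, hb2, rfl⟩ := Submodule.mem_sup.mp hb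
    exact Submodule.mem_sup.mpr ⟨(a1, b1), ⟨ha1, hb1⟩, (a2, b2), ⟨ha2, hb2⟩, rfl⟩

lemma isSummand_of_prod_top {K : Submodule R M}
    (h : IsSummand (K.prod (⊤ : Submodule R M))) : IsSummand K := by
  obtain ⟨q, hq⟩ := h
  set π := (K.prod (⊤ : Submodule R M)).projectionOnto q hq
  have hmem : ∀ x : M, ((π (x, 0) : M × M)).1 ∈ K := fun x => (π (x, 0)).2.1
  set g : M →ₗ[R] K := LinearMap.codRestrict K
    ((LinearMap.fst R M M) ∘ₗ (K.prod ⊤).subtype ∘ₗ π ∘ₗ (LinearMap.inl R M M)) hmem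
  have hg : ∀ x : K, g x = x := by
    intro x
    have hx : ((x : M), (0 : M)) ∈ K.prod (⊤ : Submodule R M) := ⟨x.2, trivial⟩
    ext
    show ((π ((x : M), 0) : M × M)).1 = (x : M)
    rw [Submodule.linearProjOfIsCompl_apply_left hq ⟨((x : M), 0), hx⟩]
  exact ⟨LinearMap.ker g, LinearMap.isCompl_of_proj hg⟩

end aux

/-- If `M ⊕ M` is a C3 module, then `M` is a C2 module: every submodule of `M`
isomorphic to a direct summand of `M` is itself a direct summand of `M`. -/
theorem stmt16 {R M : Type*} [Ring R] [AddCommGroup M] [Module R M]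
    (hC3 : ∀ N K : Submodule R (M × M), IsSummand N → IsSummand K → N ⊓ K = ⊥ →
      IsSummand (N ⊔ K)) :
    ∀ K L : Submodule R M, IsSummand L → Nonempty (K ≃ₗ[R] L) → IsSummand K := by
  rintro K L ⟨L', hL⟩ ⟨e⟩
  -- ψ : M → M, projection onto L followed by e.symm and inclusion of K
  set ψ : M →ₗ[R] M := K.subtype ∘ₗ e.symm.toLinearMap ∘ₗ (L.projectionOnto L' hL)
    with hψdef
  have hψL : ∀ (l : M) (hl : l ∈ L), ψ l = (e.symm ⟨l, hl⟩ : M) := by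
    intro l hl
    simp only [hψdef, LinearMap.comp_apply]
    rw [Submodule.linearProjOfIsCompl_apply_left hL ⟨l, hl⟩]
    rfl
  have hψK : ∀ y : M, ψ y ∈ K := fun y => (e.symm _).2
  -- shearing automorphism θ (x, y) ↦ (x + ψ y, y)
  set f : M × M →ₗ[R] M × M :=
    LinearMap.prod (LinearMap.fst R M M + ψ ∘ₗ LinearMap.snd R M M) (LinearMap.snd R M M)
  set f' : M × M →ₗ[R] M × M :=
    LinearMap.prod (LinearMap.fst R M M - ψ ∘ₗ LinearMap.snd R M M) (LinearMap.snd R M M)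
  have h1 : f ∘ₗ f' = LinearMap.id := by
    apply LinearMap.ext; rintro ⟨x, y⟩; simp [f, f']
  have h2 : f' ∘ₗ f = LinearMap.id := by
    apply LinearMap.ext; rintro ⟨x, y⟩; simp [f, f']
  set θ : (M × M) ≃ₗ[R] (M × M) := LinearEquiv.ofLinear f f' h1 h2 with hθdef
  have hθ : ∀ x y : M, (θ : (M × M) →ₗ[R] M × M) (x, y) = (x + ψ y, y) := fun x y => rfl
  set G : Submodule R (M × M) :=
    Submodule.map (θ : (M × M) →ₗ[R] M × M) ((⊥ : Submodule R M).prod L) with hGdef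
  have hGmem : ∀ z : M × M, z ∈ G ↔ ∃ l ∈ L, z = (ψ l, l) := by
    intro z
    constructor
    · rintro ⟨⟨a, b⟩, ⟨ha, hb⟩, rfl⟩
      refine ⟨b, hb, ?_⟩
      have : a = 0 := ha
      rw [hθ, this, zero_add]
    · rintro ⟨l, hl, rfl⟩
      exact ⟨(0, l), ⟨rfl, hl⟩, by rw [hθ, zero_add]⟩
  -- G is a summand of M × M
  have hGsummand : IsSummand G := by
    refine ⟨Submodule.map (θ : (M × M) →ₗ[R] M × M) ((⊤ : Submodule R M).prod L'), ?_⟩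
    have := (Submodule.orderIsoMapComap θ).isCompl
      (x := (⊥ : Submodule R M).prod L) (y := (⊤ : Submodule R M).prod L')
      (isCompl_prod isCompl_bot_top hL)
    simpa [Submodule.orderIsoMapComap] using this
  -- the second copy of M is a summand
  have hM2 : IsSummand ((⊥ : Submodule R M).prod (⊤ : Submodule R M)) :=
    ⟨(⊤ : Submodule R M).prod ⊥, isCompl_prod isCompl_bot_top isCompl_top_bot⟩
  -- G ∩ M₂ = ⊥
  have hint : G ⊓ ((⊥ : Submodule R M).prod ⊤) = ⊥ := by
    rw [eq_bot_iff]
    rintro z ⟨hzG, hz2⟩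
    obtain ⟨l, hl, rfl⟩ := (hGmem z).mp hzG
    have h0 : ψ l = 0 := hz2.1
    rw [hψL l hl] at h0
    have : e.symm ⟨l, hl⟩ = 0 := Subtype.ext h0
    have : (⟨l, hl⟩ : L) = 0 := by
      apply e.symm.injective; simpa using this
    have hl0 : l = 0 := congrArg Subtype.val this
    subst hl0
    simp [hψL 0 hl]
  have hsup : G ⊔ ((⊥ : Submodule R M).prod ⊤) = K.prod ⊤ := by
    apply le_antisymm
    · apply sup_le
      · rintro z hz
        obtain ⟨l, hl, rfl⟩ := (hGmem z).mp hz
        exact ⟨hψK l, trivial⟩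
      · rintro ⟨a, b⟩ ⟨ha, -⟩
        have : a = 0 := ha
        exact ⟨this ▸ K.zero_mem, trivial⟩
    · rintro ⟨k, y⟩ ⟨hk, -⟩
      refine Submodule.mem_sup.mpr ⟨(ψ (e ⟨k, hk⟩ : M), (e ⟨k, hk⟩ : M)),
        (hGmem _).mpr ⟨_, (e ⟨k, hk⟩).2, rfl⟩, (0, y - (e ⟨k, hk⟩ : M)), ⟨rfl, trivial⟩, ?_⟩
      have hψe : ψ ((e ⟨k, hk⟩ : M)) = k := by
        rw [hψL _ (e ⟨k, hk⟩).2]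
        rw [show (⟨(e ⟨k, hk⟩ : M), (e ⟨k, hk⟩).2⟩ : L) = e ⟨k, hk⟩ from rfl,
          LinearEquiv.symm_apply_apply]
      rw [hψe]
      simp
  have := hC3 G ((⊥ : Submodule R M).prod ⊤) hGsummand hM2 hint
  rw [hsup] at this
  exact isSummand_of_prod_top this
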